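/- Let ⟨F,w⟩ = ⟨⟨W,R⁺,R⁻⟩,w⟩ be a bi-relational pointed fuzzy frame and φ ∈ L_inv(2). Then φ is KGinv(2)-valid on ⟨F,w⟩ if and only if φ^⋈ is v₁-valid on ⟨F,w⟩ in KGbl. -/
import Mathlib



noncomputable def Gimp (x y : ℝ) : ℝ := if x ≤ y then 1 else y

inductive Fml2 : Type
  | var : ℕ → Fml2
  | inv : Fml2 → Fml2
  | and : Fml2 → Fml2 → Fml2
  | imp : Fml2 → Fml2 → Fml2
  | box1 : Fml2 → Fml2
  | dia1 : Fml2 → Fml2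
  | box2 : Fml2 → Fml2
  | dia2 : Fml2 → Fml2

noncomputable def Fml2.eval {W : Type} (Rp Rm : W → W → ℝ) (v : ℕ → W → ℝ) : Fml2 → W → ℝ
  | .var p, w => v p w
  | .inv φ, w => 1 - Fml2.eval Rp Rm v φ w
  | .and φ χ, w => min (Fml2.eval Rp Rm v φ w) (Fml2.eval Rp Rm v χ w)
  | .imp φ χ, w => Gimp (Fml2.eval Rp Rm v φ w) (Fml2.eval Rp Rm v χ w)
  | .box1 φ, w => sInf (Set.range fun w' => Gimp (Rp w w') (Fml2.eval Rp Rm v φ w'))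
  | .dia1 φ, w => sSup (Set.range fun w' => min (Rp w w') (Fml2.eval Rp Rm v φ w'))
  | .box2 φ, w => sInf (Set.range fun w' => Gimp (Rm w w') (Fml2.eval Rp Rm v φ w'))
  | .dia2 φ, w => sSup (Set.range fun w' => min (Rm w w') (Fml2.eval Rp Rm v φ w'))

inductive Lbl : Type
  | var : ℕ → Lbl
  | neg : Lbl → Lbl
  | and : Lbl → Lbl → Lbl
  | imp : Lbl → Lbl → Lbl
  | box : Lbl → Lbl
  | dia : Lbl → Lbl
  | conf : Lbl → Lbl
  | sAnd : Lbl → Lbl → Lbl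
  | sImp : Lbl → Lbl → Lbl
  | bbox : Lbl → Lbl
  | bdia : Lbl → Lbl

noncomputable def Lbl.eval {W : Type} (Rp Rm : W → W → ℝ) (v1 v2 : ℕ → W → ℝ) :
    Lbl → W → ℝ × ℝ
  | .var p, w => (v1 p w, v2 p w)
  | .neg φ, w => ((Lbl.eval Rp Rm v1 v2 φ w).2, (Lbl.eval Rp Rm v1 v2 φ w).1)
  | .conf φ, w => (1 - (Lbl.eval Rp Rm v1 v2 φ w).2, 1 - (Lbl.eval Rp Rm v1 v2 φ w).1)
  | .and φ χ, w =>
      (min (Lbl.eval Rp Rm v1 v2 φ w).1 (Lbl.eval Rp Rm v1 v2 χ w).1,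
       max (Lbl.eval Rp Rm v1 v2 φ w).2 (Lbl.eval Rp Rm v1 v2 χ w).2)
  | .imp φ χ, w =>
      (Gimp (Lbl.eval Rp Rm v1 v2 φ w).1 (Lbl.eval Rp Rm v1 v2 χ w).1,
       if (Lbl.eval Rp Rm v1 v2 χ w).2 ≤ (Lbl.eval Rp Rm v1 v2 φ w).2 then 0
       else (Lbl.eval Rp Rm v1 v2 χ w).2)
  | .sAnd φ χ, w =>
      (min (Lbl.eval Rp Rm v1 v2 φ w).1 (Lbl.eval Rp Rm v1 v2 χ w).1,
       min (Lbl.eval Rp Rm v1 v2 φ w).2 (Lbl.eval Rp Rm v1 v2 χ w).2)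
  | .sImp φ χ, w =>
      (Gimp (Lbl.eval Rp Rm v1 v2 φ w).1 (Lbl.eval Rp Rm v1 v2 χ w).1,
       Gimp (Lbl.eval Rp Rm v1 v2 φ w).2 (Lbl.eval Rp Rm v1 v2 χ w).2)
  | .box φ, w =>
      (sInf (Set.range fun w' => Gimp (Rp w w') (Lbl.eval Rp Rm v1 v2 φ w').1),
       sSup (Set.range fun w' => min (Rm w w') (Lbl.eval Rp Rm v1 v2 φ w').2))
  | .dia φ, w =>
      (sSup (Set.range fun w' => min (Rp w w') (Lbl.eval Rp Rm v1 v2 φ w').1),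
       sInf (Set.range fun w' => Gimp (Rm w w') (Lbl.eval Rp Rm v1 v2 φ w').2))
  | .bbox φ, w =>
      (sInf (Set.range fun w' => Gimp (Rp w w') (Lbl.eval Rp Rm v1 v2 φ w').1),
       sInf (Set.range fun w' => Gimp (Rm w w') (Lbl.eval Rp Rm v1 v2 φ w').2))
  | .bdia φ, w =>
      (sSup (Set.range fun w' => min (Rp w w') (Lbl.eval Rp Rm v1 v2 φ w').1),
       sSup (Set.range fun w' => min (Rm w w') (Lbl.eval Rp Rm v1 v2 φ w').2))

/-- KGinv(2)-validity on a pointed frame. -/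
def Valid2 {W : Type} (Rp Rm : W → W → ℝ) (φ : Fml2) (w : W) : Prop :=
  ∀ v : ℕ → W → ℝ, (∀ p u, v p u ∈ Set.Icc (0:ℝ) 1) → Fml2.eval Rp Rm v φ w = 1

/-- v₁-validity on a pointed frame. -/
def V1Valid {W : Type} (Rp Rm : W → W → ℝ) (φ : Lbl) (w : W) : Prop :=
  ∀ v1 v2 : ℕ → W → ℝ, (∀ p u, v1 p u ∈ Set.Icc (0:ℝ) 1) →
    (∀ p u, v2 p u ∈ Set.Icc (0:ℝ) 1) → (Lbl.eval Rp Rm v1 v2 φ w).1 = 1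

/-- v₂-validity on a pointed frame. -/
def V2Valid {W : Type} (Rp Rm : W → W → ℝ) (φ : Lbl) (w : W) : Prop :=
  ∀ v1 v2 : ℕ → W → ℝ, (∀ p u, v1 p u ∈ Set.Icc (0:ℝ) 1) →
    (∀ p u, v2 p u ∈ Set.Icc (0:ℝ) 1) → (Lbl.eval Rp Rm v1 v2 φ w).2 = 0

/-- Strong validity on a pointed frame. -/
def StrongValid {W : Type} (Rp Rm : W → W → ℝ) (φ : Lbl) (w : W) : Prop :=
  V1Valid Rp Rm φ w ∧ V2Valid Rp Rm φ w

/-- The ⋈ translation from L_inv(2) to Lbl: □₁ ↦ □, ◇₁ ↦ ◇, □₂ ↦ ¬◇¬, ◇₂ ↦ ¬□¬,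
¬ᵢ ↦ ¬− . -/
def Fml2.toBl : Fml2 → Lbl
  | .var p => .var p
  | .inv φ => .neg (.conf φ.toBl)
  | .and φ χ => .and φ.toBl χ.toBl
  | .imp φ χ => .imp φ.toBl χ.toBl
  | .box1 φ => .box φ.toBl
  | .dia1 φ => .dia φ.toBl
  | .box2 φ => .neg (.dia (.neg φ.toBl))
  | .dia2 φ => .neg (.box (.neg φ.toBl))

/-- φ is KGinv(2)-valid on ⟨F,w⟩ iff φ^⋈ is v₁-valid on ⟨F,w⟩. -/
lemma key {W : Type} (Rp Rm : W → W → ℝ) (v1 v2 : ℕ → W → ℝ) (φ : Fml2) :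
    ∀ w, (Lbl.eval Rp Rm v1 v2 φ.toBl w).1 = Fml2.eval Rp Rm v1 φ w := by
  induction φ with
  | var p => intro w; rfl
  | inv φ ih => intro w; simp [Fml2.toBl, Lbl.eval, Fml2.eval, ih]
  | and φ χ ih1 ih2 => intro w; simp [Fml2.toBl, Lbl.eval, Fml2.eval, ih1, ih2]
  | imp φ χ ih1 ih2 => intro w; simp [Fml2.toBl, Lbl.eval, Fml2.eval, ih1, ih2]
  | box1 φ ih => intro w; simp [Fml2.toBl, Lbl.eval, Fml2.eval, ih]
  | dia1 φ ih => intro w; simp [Fml2.toBl, Lbl.eval, Fml2.eval, ih]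
  | box2 φ ih => intro w; simp [Fml2.toBl, Lbl.eval, Fml2.eval, ih]
  | dia2 φ ih => intro w; simp [Fml2.toBl, Lbl.eval, Fml2.eval, ih]

theorem statement11 {W : Type} [Nonempty W] (Rp Rm : W → W → ℝ)
    (hRp : ∀ w w', Rp w w' ∈ Set.Icc (0:ℝ) 1)
    (hRm : ∀ w w', Rm w w' ∈ Set.Icc (0:ℝ) 1)
    (w : W) (φ : Fml2) :
    Valid2 Rp Rm φ w ↔ V1Valid Rp Rm φ.toBl w := by
  constructor
  · intro h v1 v2 h1 h2
    rw [key]; exact h v1 h1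
  · intro h v hv
    rw [← key Rp Rm v v]; exact h v v hv hv
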